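/- Let N ≥ 3 and q > N/(N−2). Set γ = 2/(q−1) and c = (γ·(N−2−γ))^(1/(q−1)), and define u : EuclideanSpace ℝ (Fin N) → ℝ by u(x) = c·‖x‖^(−γ). Then c > 0, u is positive and C² on the punctured space {x : x ≠ 0}, and −Δu(x) = u(x)^q for every x ≠ 0. (In particular the inequality −Δu ≥ u^q admits a positive solution in every exterior domain when q exceeds the critical exponent N/(N−2).) -/

import Mathlib

open MeasureTheory Filter Real Matrix
open scoped RealInnerProductSpace

variable {E : Type*} [NormedAddCommGroup E] [InnerProductSpace ℝ E]

noncomputable def innerSL₂ (E : Type*) [NormedAddCommGroup E] [InnerProductSpace ℝ E] :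
    E →L[ℝ] (E →L[ℝ] ℝ) := innerSL ℝ

@[simp] lemma innerSL₂_apply (x v : E) : innerSL₂ E x v = ⟪x, v⟫ := rfl

lemma hQ (x : E) : HasFDerivAt (fun y : E => (‖y‖:ℝ)^2) ((2:ℝ) • innerSL₂ E x) x := by
  have h := (hasFDerivAt_id x).inner ℝ (hasFDerivAt_id x)
  have he : (fun y : E => (‖y‖:ℝ)^2) = fun y : E => ⟪y, y⟫ := by
    funext y; rw [real_inner_self_eq_norm_sq]
  rw [he]
  refine h.congr_fderiv ?_
  ext v
  simp [innerSL₂, innerSL_apply_apply, real_inner_comm, two_mul]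
  rfl

lemma hQp (p : ℝ) (x : E) (hx : x ≠ 0) :
    HasFDerivAt (fun y : E => ((‖y‖:ℝ)^2) ^ p)
      ((2 * p * ((‖x‖:ℝ)^2) ^ (p-1)) • innerSL₂ E x) x := by
  have hne : (‖x‖:ℝ)^2 ≠ 0 := pow_ne_zero _ (norm_ne_zero_iff.mpr hx)
  have hd := Real.hasDerivAt_rpow_const (x := (‖x‖:ℝ)^2) (p := p) (Or.inl hne)
  have h := hd.comp_hasFDerivAt x (hQ x)
  refine h.congr_fderiv ?_
  rw [smul_smul]; ring_nf

-- first derivative of y ↦ c * (‖y‖²)^p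
lemma hD1 (c p : ℝ) (x : E) (hx : x ≠ 0) :
    HasFDerivAt (fun y : E => c * ((‖y‖:ℝ)^2) ^ p)
      ((c * (2 * p) * ((‖x‖:ℝ)^2) ^ (p-1)) • innerSL₂ E x) x := by
  have h := (hQp p x hx).const_mul c
  refine h.congr_fderiv ?_
  rw [smul_smul]; ring_nf

-- second derivative map
lemma hD2 (c p : ℝ) (x : E) (hx : x ≠ 0) :
    HasFDerivAt (fun y : E => (c * (2*p) * ((‖y‖:ℝ)^2) ^ (p-1)) • innerSL₂ E y)
      ((c * (2*p) * ((‖x‖:ℝ)^2) ^ (p-1)) • innerSL₂ E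
        + ((c * (2*p) * (2 * (p-1)) * ((‖x‖:ℝ)^2) ^ (p-1-1)) • innerSL₂ E x).smulRight
          (innerSL₂ E x)) x := by
  have hs : HasFDerivAt (fun y : E => c * (2*p) * ((‖y‖:ℝ)^2) ^ (p-1))
      ((c * (2*p) * (2 * (p-1)) * ((‖x‖:ℝ)^2) ^ (p-1-1)) • innerSL₂ E x) x := by
    have h := (hQp (p-1) x hx).const_mul (c * (2*p))
    refine h.congr_fderiv ?_
    rw [smul_smul]; ring_nf
  exact hs.smul ((innerSL₂ E).hasFDerivAt)

/-- The Laplacian of `u` at `x`: the sum of pure second partial derivatives in the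
directions of the standard orthonormal basis. -/
noncomputable def laplacian (N : ℕ) (u : EuclideanSpace ℝ (Fin N) → ℝ)
    (x : EuclideanSpace ℝ (Fin N)) : ℝ :=
  ∑ i : Fin N, iteratedFDeriv ℝ 2 u x
    ![EuclideanSpace.basisFun (Fin N) ℝ i, EuclideanSpace.basisFun (Fin N) ℝ i]

/-- For `N ≥ 3` and `q > N/(N-2)`, with `γ = 2/(q-1)` and `c = (γ(N-2-γ))^(1/(q-1))`, the
function `u(x) = c‖x‖^(-γ)` is positive and `C²` on `{x ≠ 0}` and satisfies `-Δu = u^q`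
there. -/
theorem supercritical_solution (N : ℕ) (hN : 3 ≤ N) (q : ℝ)
    (hq : (N : ℝ) / ((N : ℝ) - 2) < q)
    (γ c : ℝ) (hγ : γ = 2 / (q - 1)) (hc : c = (γ * ((N : ℝ) - 2 - γ)) ^ (1 / (q - 1)))
    (u : EuclideanSpace ℝ (Fin N) → ℝ)
    (hu : ∀ x : EuclideanSpace ℝ (Fin N), u x = c * ‖x‖ ^ (-γ)) :
    0 < c ∧
    (∀ x : EuclideanSpace ℝ (Fin N), x ≠ 0 → 0 < u x) ∧
    ContDiffOn ℝ 2 u {x : EuclideanSpace ℝ (Fin N) | x ≠ 0} ∧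
    (∀ x : EuclideanSpace ℝ (Fin N), x ≠ 0 → -laplacian N u x = u x ^ q) := by
  have hN3 : (3:ℝ) ≤ (N:ℝ) := by exact_mod_cast hN
  have hN2 : (0:ℝ) < (N:ℝ) - 2 := by linarith
  have hq1 : 1 < q := lt_trans ((one_lt_div hN2).mpr (by linarith)) hq
  have hqs : 0 < q - 1 := by linarith
  have hγpos : 0 < γ := hγ ▸ div_pos two_pos hqs
  have hγlt : γ < (N:ℝ) - 2 := by
    rw [hγ, div_lt_iff₀ hqs]
    have := (div_lt_iff₀ hN2).mp hq
    nlinarith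
  have hA : 0 < γ * ((N:ℝ) - 2 - γ) := mul_pos hγpos (by linarith)
  have hcpos : 0 < c := hc ▸ rpow_pos_of_pos hA _
  refine ⟨hcpos, ?_, ?_, ?_⟩
  · intro x hx
    rw [hu]
    exact mul_pos hcpos (rpow_pos_of_pos (norm_pos_iff.mpr hx) _)
  · have hufun : u = fun y => c * ‖y‖ ^ (-γ) := funext hu
    rw [hufun]
    intro x hx
    exact (contDiffAt_const.mul
      ((contDiffAt_norm ℝ hx).rpow_const_of_ne (norm_ne_zero_iff.mpr hx))).contDiffWithinAt
  · intro x hx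
    set p : ℝ := -γ/2 with hp
    have hxn : (0:ℝ) < ‖x‖ := norm_pos_iff.mpr hx
    have hQpos : (0:ℝ) < ‖x‖^2 := by positivity
    have hQne : (‖x‖:ℝ)^2 ≠ 0 := ne_of_gt hQpos
    have hufun2 : u = fun y : EuclideanSpace ℝ (Fin N) => c * ((‖y‖:ℝ)^2) ^ p := by
      funext y
      rw [hu]
      congr 1
      rw [← Real.rpow_natCast ‖y‖ 2, ← Real.rpow_mul (norm_nonneg y)]
      congr 1
      rw [hp]
      push_cast
      ring
    have hfd : ∀ y : EuclideanSpace ℝ (Fin N), y ≠ 0 →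
        fderiv ℝ u y = (c * (2*p) * ((‖y‖:ℝ)^2) ^ (p-1)) • innerSL₂ (EuclideanSpace ℝ (Fin N)) y := by
      intro y hy
      rw [hufun2]
      exact (hD1 c p y hy).fderiv
    have hev : fderiv ℝ u =ᶠ[nhds x]
        fun y => (c * (2*p) * ((‖y‖:ℝ)^2) ^ (p-1)) • innerSL₂ (EuclideanSpace ℝ (Fin N)) y := by
      filter_upwards [IsOpen.mem_nhds isOpen_compl_singleton hx] with y hy
      exact hfd y hy
    have h2 : fderiv ℝ (fderiv ℝ u) x
        = (c * (2*p) * ((‖x‖:ℝ)^2) ^ (p-1)) • innerSL₂ (EuclideanSpace ℝ (Fin N))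
          + ((c * (2*p) * (2 * (p-1)) * ((‖x‖:ℝ)^2) ^ (p-1-1)) • innerSL₂ (EuclideanSpace ℝ (Fin N)) x).smulRight
            (innerSL₂ (EuclideanSpace ℝ (Fin N)) x) := by
      rw [hev.fderiv_eq]
      exact (hD2 c p x hx).fderiv
    have hone : ∀ i : Fin N,
        (inner ℝ (EuclideanSpace.single i (1:ℝ)) (EuclideanSpace.single i (1:ℝ)) : ℝ) = 1 := by
      intro i
      simp [EuclideanSpace.inner_single_right, EuclideanSpace.single_apply]
    have hxi : ∀ i : Fin N,
        (inner ℝ x (EuclideanSpace.single i (1:ℝ)) : ℝ) = x i := by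
      intro i
      simp [EuclideanSpace.inner_single_right]
    have hli : ∀ i : Fin N, iteratedFDeriv ℝ 2 u x
        ![EuclideanSpace.basisFun (Fin N) ℝ i, EuclideanSpace.basisFun (Fin N) ℝ i]
        = (c * (2*p) * ((‖x‖:ℝ)^2) ^ (p-1)) * 1
          + ((c * (2*p) * (2 * (p-1)) * ((‖x‖:ℝ)^2) ^ (p-1-1)) * (x i)) * (x i) := by
      intro i
      rw [iteratedFDeriv_two_apply, h2]
      simp only [Matrix.cons_val_zero, Matrix.cons_val_one, Matrix.head_cons,
        ContinuousLinearMap.add_apply, ContinuousLinearMap.smul_apply,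
        ContinuousLinearMap.smulRight_apply, innerSL₂_apply, smul_eq_mul,
        EuclideanSpace.basisFun_apply]
      rw [hone i, hxi i]
    have hsum : ∑ i, (x i) * (x i) = (‖x‖:ℝ)^2 := by
      rw [← real_inner_self_eq_norm_sq]
      rw [PiLp.inner_apply]
      simp [RCLike.inner_apply, sq]
    have hLap : laplacian N u x
        = (c * (2*p)) * ((N:ℝ) + 2*(p-1)) * ((‖x‖:ℝ)^2) ^ (p-1) := by
      unfold laplacian
      rw [Finset.sum_congr rfl fun i _ => hli i, Finset.sum_add_distrib]
      rw [Finset.sum_const, Finset.card_univ, Fintype.card_fin]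
      have hsplit : ∑ i : Fin N, ((c * (2*p) * (2 * (p-1)) * ((‖x‖:ℝ)^2) ^ (p-1-1)) * (x i)) * (x i)
          = (c * (2*p) * (2 * (p-1)) * ((‖x‖:ℝ)^2) ^ (p-1-1)) * ((‖x‖:ℝ)^2) := by
        rw [← hsum, Finset.mul_sum]
        exact Finset.sum_congr rfl fun i _ => by ring
      rw [hsplit, show p-1 = (p-1-1)+1 by ring, Real.rpow_add_one hQne]
      push_cast
      ring
    have hexp : ((‖x‖:ℝ)^2) ^ (p-1) = ‖x‖ ^ (-(γ+2)) := by
      rw [← Real.rpow_natCast ‖x‖ 2, ← Real.rpow_mul (norm_nonneg x)]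
      congr 1
      rw [hp]
      push_cast
      ring
    have hγq : γ * (q-1) = 2 := by
      rw [hγ]; field_simp
    have hrhs : u x ^ q = c * (γ * ((N:ℝ) - 2 - γ)) * ‖x‖ ^ (-(γ+2)) := by
      rw [hu, mul_rpow hcpos.le (rpow_nonneg (norm_nonneg x) _),
        ← Real.rpow_mul (norm_nonneg x)]
      have h1 : -γ * q = -(γ+2) := by nlinarith
      have h2 : c ^ q = c * (γ * ((N:ℝ) - 2 - γ)) := by
        rw [hc, ← Real.rpow_mul hA.le]
        have h3 : 1 / (q-1) * q = 1 + 1/(q-1) := by field_simp; ring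
        rw [h3, Real.rpow_add hA, Real.rpow_one]
        ring
      rw [h1, h2]
    rw [hrhs, hLap, hexp, hp]
    ring
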